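/- Let P | 2O be a prime ideal of O, ω ∈ ∂^{-1}P^{-1} with ωO_P = ∂^{-1}P^{-1}O_P, and ε ∈ O such that 1 − 4ε has quadratic defect 4O_P in O_P (equivalently, 1 + y + εy² ∉ P for all y ∈ O). Then Σ_{x,y ∈ O/P} e{2(x² + xy + εy²)ω} = −N(P). -/

import Mathlib

set_option synthInstance.maxHeartbeats 1000000
set_option maxHeartbeats 1000000

open NumberField nonZeroDivisors

section Aux

/-- Auxiliary: the character sum of an anisotropic binary quadratic form over a finite
field of characteristic `2`, against a nontrivial additive character `ψ`. -/
private lemma quadSum_aux {F : Type*} [CommRing F] [Fintype F] [Nontrivial F]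
    [NoZeroDivisors F]
    (hinv : ∀ x : F, x ≠ 0 → ∃ y : F, x * y = 1)
    (h2F : (2 : F) = 0) (εb : F)
    (hεF : ∀ t : F, 1 + t + εb * t ^ 2 ≠ 0)
    (ψ : F → ℂ) (hψadd : ∀ x y : F, ψ (x + y) = ψ x * ψ y) (hψ0 : ψ 0 = 1)
    (hψsum : ∑ x : F, ψ x = 0) :
    ∑ p : F × F, ψ (p.1 ^ 2 + p.1 * p.2 + εb * p.2 ^ 2) = -(Fintype.card F : ℂ) := by
  classical
  have hsq : ∀ c : F, ∃ t : F, t ^ 2 = c := by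
    have hinj : Function.Injective (fun t : F => t ^ 2) := by
      intro t u h
      simp only at h
      have h0 : (t - u) ^ 2 = 0 := by linear_combination h + (u ^ 2 - t * u) * h2F
      have h1 : t - u = 0 := pow_eq_zero_iff two_ne_zero |>.mp h0
      linear_combination h1
    intro c
    exact Finite.surjective_of_injective hinj c
  have hε0 : εb ≠ 0 := by
    intro h0
    apply hεF (-1)
    rw [h0]
    ring
  have haniso : ∀ X Y : F, X ^ 2 + X * Y + εb * Y ^ 2 = 0 → X = 0 ∧ Y = 0 := by
    intro X Y h
    by_cases hX : X = 0
    · subst hX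
      refine ⟨rfl, ?_⟩
      have h1 : εb * Y ^ 2 = 0 := by linear_combination h
      have h2 : Y ^ 2 = 0 := (mul_eq_zero.mp h1).resolve_left hε0
      exact pow_eq_zero_iff two_ne_zero |>.mp h2
    · exfalso
      obtain ⟨Xi, hXi⟩ := hinv X hX
      apply hεF (Y * Xi)
      have hkey : (1 + Y * Xi + εb * (Y * Xi) ^ 2) * X ^ 2 = 0 := by
        calc (1 + Y * Xi + εb * (Y * Xi) ^ 2) * X ^ 2
            = X ^ 2 + X * Y + εb * Y ^ 2 := by
              linear_combination (X * Y + εb * Y ^ 2 * (Xi * X + 1)) * hXi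
          _ = 0 := h
      exact (mul_eq_zero.mp hkey).resolve_right (pow_ne_zero 2 hX)
  set g : F × F → F := fun p => p.1 ^ 2 + p.1 * p.2 + εb * p.2 ^ 2 with hg
  set N : F → ℕ := fun c => (Finset.univ.filter fun p : F × F => g p = c).card with hN
  have hN0 : N 0 = 1 := by
    rw [hN]
    simp only
    have h1 : (Finset.univ.filter fun p : F × F => g p = 0) = {(0, 0)} := by
      ext p
      simp only [Finset.mem_filter, Finset.mem_univ, true_and, Finset.mem_singleton, hg]
      constructor
      · intro h
        obtain ⟨h1, h2⟩ := haniso p.1 p.2 h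
        exact Prod.ext h1 h2
      · rintro rfl
        simp only
        ring
    rw [h1, Finset.card_singleton]
  have hNconst : ∀ c : F, c ≠ 0 → N c = N 1 := by
    intro c hc
    obtain ⟨l, hl⟩ := hsq c
    have hl0 : l ≠ 0 := by
      rintro rfl
      rw [zero_pow two_ne_zero] at hl
      exact hc hl.symm
    obtain ⟨m, hm⟩ := hinv l hl0
    rw [hN]
    simp only
    symm
    refine Finset.card_bij' (fun p _ => (l * p.1, l * p.2)) (fun p _ => (m * p.1, m * p.2))
      ?_ ?_ ?_ ?_
    · intro p hp
      simp only [Finset.mem_filter, Finset.mem_univ, true_and, hg] at hp ⊢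
      rw [← hl]
      linear_combination l ^ 2 * hp
    · intro p hp
      simp only [Finset.mem_filter, Finset.mem_univ, true_and, hg] at hp ⊢
      have h1 : (m * p.1) ^ 2 + (m * p.1) * (m * p.2) + εb * (m * p.2) ^ 2
          = m ^ 2 * (p.1 ^ 2 + p.1 * p.2 + εb * p.2 ^ 2) := by ring
      rw [h1, hp, ← hl]
      linear_combination (m * l + 1) * hm
    · intro p hp
      obtain ⟨p1, p2⟩ := p
      simp only [Prod.mk.injEq]
      constructor
      · linear_combination p1 * hm
      · linear_combination p2 * hm
    · intro p hp
      obtain ⟨p1, p2⟩ := p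
      simp only [Prod.mk.injEq]
      constructor
      · linear_combination p1 * hm
      · linear_combination p2 * hm
  have htotal : ∑ c : F, N c = Fintype.card F * Fintype.card F := by
    rw [hN]
    simp only
    rw [← Finset.card_eq_sum_card_fiberwise (fun (p : F × F) _ => Finset.mem_univ (g p)),
      Finset.card_univ, Fintype.card_prod]
  have hgroup : ∑ p : F × F, ψ (g p) = ∑ c : F, (N c : ℂ) * ψ c := by
    rw [← Finset.sum_fiberwise_of_maps_to' (fun (p : F × F) _ => Finset.mem_univ (g p)) ψ]
    refine Finset.sum_congr rfl fun c _ => ?_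
    rw [Finset.sum_const, nsmul_eq_mul, hN]
  set q : ℕ := Fintype.card F with hqdef
  have hq2 : 1 < q := Fintype.one_lt_card
  have hq1 : ((q : ℂ) - 1) ≠ 0 := by
    intro h
    have h1 : (q : ℂ) = 1 := by linear_combination h
    have h2 : q = 1 := by exact_mod_cast h1
    omega
  have hN1C : ((N 1 : ℕ) : ℂ) = (q : ℂ) + 1 := by
    have hCtotal : ∑ c : F, ((N c : ℕ) : ℂ) = (q : ℂ) * (q : ℂ) := by
      rw [← Nat.cast_sum, htotal]
      push_cast
      ring
    have h1 : ∑ c : F, (((N c : ℕ) : ℂ) - ((N 1 : ℕ) : ℂ)) = 1 - ((N 1 : ℕ) : ℂ) := by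
      rw [Finset.sum_eq_single 0]
      · rw [hN0]; norm_num
      · intro c _ hc
        rw [hNconst c hc, sub_self]
      · intro h; exact absurd (Finset.mem_univ 0) h
    have h2 : ∑ c : F, ((N c : ℕ) : ℂ)
        = (1 - ((N 1 : ℕ) : ℂ)) + (q : ℂ) * ((N 1 : ℕ) : ℂ) := by
      calc ∑ c : F, ((N c : ℕ) : ℂ)
          = ∑ c : F, ((((N c : ℕ) : ℂ) - ((N 1 : ℕ) : ℂ)) + ((N 1 : ℕ) : ℂ)) :=
            Finset.sum_congr rfl fun c _ => by ring
        _ = (∑ c : F, (((N c : ℕ) : ℂ) - ((N 1 : ℕ) : ℂ))) + ∑ _c : F, ((N 1 : ℕ) : ℂ) :=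
            Finset.sum_add_distrib
        _ = (1 - ((N 1 : ℕ) : ℂ)) + (q : ℂ) * ((N 1 : ℕ) : ℂ) := by
            rw [h1, Finset.sum_const, Finset.card_univ, nsmul_eq_mul, hqdef]
    have h3 : ((q : ℂ) - 1) * ((N 1 : ℕ) : ℂ) = ((q : ℂ) - 1) * ((q : ℂ) + 1) := by
      have h4 := hCtotal
      rw [h2] at h4
      linear_combination h4
    exact mul_left_cancel₀ hq1 h3
  have hS : ∑ c : F, ((N c : ℕ) : ℂ) * ψ c = -(q : ℂ) := by
    have h1 : ∑ c : F, (((N c : ℕ) : ℂ) - ((N 1 : ℕ) : ℂ)) * ψ c = 1 - ((N 1 : ℕ) : ℂ) := by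
      rw [Finset.sum_eq_single 0]
      · rw [hN0, hψ0]; norm_num
      · intro c _ hc
        rw [hNconst c hc, sub_self, zero_mul]
      · intro h; exact absurd (Finset.mem_univ 0) h
    calc ∑ c : F, ((N c : ℕ) : ℂ) * ψ c
        = ∑ c : F, ((((N c : ℕ) : ℂ) - ((N 1 : ℕ) : ℂ)) * ψ c + ((N 1 : ℕ) : ℂ) * ψ c) :=
          Finset.sum_congr rfl fun c _ => by ring
      _ = (∑ c : F, (((N c : ℕ) : ℂ) - ((N 1 : ℕ) : ℂ)) * ψ c)
            + ((N 1 : ℕ) : ℂ) * ∑ c : F, ψ c := by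
          rw [Finset.sum_add_distrib, Finset.mul_sum]
      _ = 1 - ((N 1 : ℕ) : ℂ) := by rw [h1, hψsum, mul_zero, add_zero]
      _ = -(q : ℂ) := by rw [hN1C]; ring
  calc ∑ p : F × F, ψ (p.1 ^ 2 + p.1 * p.2 + εb * p.2 ^ 2)
      = ∑ p : F × F, ψ (g p) := rfl
    _ = ∑ c : F, ((N c : ℕ) : ℂ) * ψ c := hgroup
    _ = -(q : ℂ) := hS

/-- Auxiliary: descending a `P`-periodic multiplicative map to the quotient. -/
private lemma psi_aux {R : Type*} [CommRing R] (P : Ideal R) [Fintype (R ⧸ P)]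
    (f : R → ℂ) (hadd : ∀ a b : R, f (a + b) = f a * f b)
    (honeP : ∀ a ∈ P, f a = 1) (hnt : ∃ a : R, f a ≠ 1)
    (s : R ⧸ P → R) (hs : ∀ x, Ideal.Quotient.mk P (s x) = x) :
    (∀ a : R, f (s (Ideal.Quotient.mk P a)) = f a) ∧
    (∀ x y : R ⧸ P, f (s (x + y)) = f (s x) * f (s y)) ∧
    (f (s 0) = 1) ∧ (∑ x : R ⧸ P, f (s x) = 0) := by
  have hmk : ∀ a : R, f (s (Ideal.Quotient.mk P a)) = f a := by
    intro a
    have hd : s (Ideal.Quotient.mk P a) - a ∈ P := Ideal.Quotient.eq.mp (hs _)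
    calc f (s (Ideal.Quotient.mk P a))
        = f (a + (s (Ideal.Quotient.mk P a) - a)) := by congr 1; ring
      _ = f a * f (s (Ideal.Quotient.mk P a) - a) := hadd _ _
      _ = f a := by rw [honeP _ hd, mul_one]
  have haddq : ∀ x y : R ⧸ P, f (s (x + y)) = f (s x) * f (s y) := by
    intro x y
    have hxy : x + y = Ideal.Quotient.mk P (s x + s y) := by rw [map_add, hs, hs]
    rw [hxy, hmk, hadd]
  have h0 : f (s 0) = 1 := by
    have h1 : (0 : R ⧸ P) = Ideal.Quotient.mk P 0 := (map_zero _).symm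
    rw [h1, hmk]
    exact honeP 0 P.zero_mem
  refine ⟨hmk, haddq, h0, ?_⟩
  obtain ⟨a, ha⟩ := hnt
  have hb : f (s (Ideal.Quotient.mk P a)) ≠ 1 := by rw [hmk]; exact ha
  set b := Ideal.Quotient.mk P a with hbdef
  have h1 : ∑ x : R ⧸ P, f (s (b + x)) = ∑ x : R ⧸ P, f (s x) :=
    Fintype.sum_equiv (Equiv.addLeft b) _ _ (fun x => rfl)
  have h2 : ∑ x : R ⧸ P, f (s (b + x)) = f (s b) * ∑ x : R ⧸ P, f (s x) := by
    rw [Finset.mul_sum]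
    exact Finset.sum_congr rfl fun x _ => haddq b x
  have h3 : (f (s b) - 1) * ∑ x : R ⧸ P, f (s x) = 0 := by
    rw [sub_mul, one_mul, ← h2, h1, sub_self]
  rcases mul_eq_zero.mp h3 with h | h
  · exact absurd (by linear_combination h) hb
  · exact h

/-- Auxiliary: pushing the quadratic form through the quotient map. -/
private lemma mk_aux {R : Type*} [CommRing R] (P : Ideal R)
    (s : R ⧸ P → R) (hs : ∀ x, Ideal.Quotient.mk P (s x) = x) (ε : R) :
    ∀ x y : R ⧸ P, Ideal.Quotient.mk P (s x ^ 2 + s x * s y + ε * s y ^ 2)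
      = x ^ 2 + x * y + (Ideal.Quotient.mk P ε) * y ^ 2 := by
  intro x y
  rw [map_add, map_add, map_pow, map_mul, map_mul, map_pow, hs, hs]

/-- Auxiliary: characteristic two in the quotient. -/
private lemma two_aux {R : Type*} [CommRing R] (P : Ideal R)
    (hP2 : P ∣ Ideal.span {(2 : R)}) : (2 : R ⧸ P) = 0 := by
  have h2P : (2 : R) ∈ P := (Ideal.le_of_dvd hP2) (Ideal.mem_span_singleton_self 2)
  have h1 : Ideal.Quotient.mk P (2 : R) = 0 := Ideal.Quotient.eq_zero_iff_mem.mpr h2P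
  rw [show (2 : R ⧸ P) = Ideal.Quotient.mk P 2 from (map_ofNat _ 2).symm]
  exact h1

/-- Auxiliary: the quadratic-defect condition in the quotient. -/
private lemma eps_aux {R : Type*} [CommRing R] (P : Ideal R)
    (s : R ⧸ P → R) (hs : ∀ x, Ideal.Quotient.mk P (s x) = x) (ε : R)
    (hε : ∀ y : R, 1 + y + ε * y ^ 2 ∉ P) :
    ∀ t : R ⧸ P, 1 + t + (Ideal.Quotient.mk P ε) * t ^ 2 ≠ 0 := by
  intro t h
  apply hε (s t)
  have h1 : Ideal.Quotient.mk P (1 + s t + ε * (s t) ^ 2) = 0 := by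
    rw [map_add, map_add, map_one, map_mul, map_pow, hs]
    exact h
  exact Ideal.Quotient.eq_zero_iff_mem.mp h1

/-- Auxiliary: traces of `P`-multiples of `ω` are integers. -/
private lemma trace_int_aux (K : Type*) [Field K] [NumberField K]
    (P : Ideal (RingOfIntegers K)) (hP0 : P ≠ ⊥) (ω : K) (J : Ideal (RingOfIntegers K))
    (hJ : (FractionalIdeal.spanSingleton (nonZeroDivisors (RingOfIntegers K)) ω) *
        ((differentIdeal ℤ (RingOfIntegers K) * P : Ideal (RingOfIntegers K)) :
          FractionalIdeal (nonZeroDivisors (RingOfIntegers K)) K)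
      = (J : FractionalIdeal (nonZeroDivisors (RingOfIntegers K)) K)) :
    ∀ a : RingOfIntegers K, a ∈ P →
      Algebra.trace ℚ K ((a : K) * ω) ∈ (algebraMap ℤ ℚ).range := by
  have hPne : ((P : Ideal (RingOfIntegers K)) : FractionalIdeal (RingOfIntegers K)⁰ K) ≠ 0 :=
    FractionalIdeal.coeIdeal_ne_zero.mpr hP0
  have hDdef : ((differentIdeal ℤ (RingOfIntegers K) : Ideal (RingOfIntegers K)) :
        FractionalIdeal (RingOfIntegers K)⁰ K)
      = (FractionalIdeal.dual ℤ ℚ (1 : FractionalIdeal (RingOfIntegers K)⁰ K))⁻¹ :=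
    coeIdeal_differentIdeal ℤ ℚ K (RingOfIntegers K)
  have hone : (1 : FractionalIdeal (RingOfIntegers K)⁰ K) ≠ 0 := by
    intro h
    exact one_ne_zero (α := K) (by
      have h1 := FractionalIdeal.one_mem_one (P := K) ((RingOfIntegers K)⁰)
      rw [h] at h1
      simpa using h1)
  have hdualne : (FractionalIdeal.dual ℤ ℚ (1 : FractionalIdeal (RingOfIntegers K)⁰ K)) ≠ 0 :=
    FractionalIdeal.dual_ne_zero ℤ ℚ (hI := hone)
  have hdualcancel : (FractionalIdeal.dual ℤ ℚ (1 : FractionalIdeal (RingOfIntegers K)⁰ K))⁻¹ *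
      FractionalIdeal.dual ℤ ℚ (1 : FractionalIdeal (RingOfIntegers K)⁰ K) = 1 := by
    rw [mul_comm]; exact mul_inv_cancel₀ hdualne
  have hPcancel : ((P : Ideal (RingOfIntegers K)) : FractionalIdeal (RingOfIntegers K)⁰ K) *
      ((P : Ideal (RingOfIntegers K)) : FractionalIdeal (RingOfIntegers K)⁰ K)⁻¹ = 1 :=
    mul_inv_cancel₀ hPne
  intro a ha
  have h1 : FractionalIdeal.spanSingleton (RingOfIntegers K)⁰ ((a : K) * ω) *
      (((differentIdeal ℤ (RingOfIntegers K) * P : Ideal (RingOfIntegers K))) :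
        FractionalIdeal (RingOfIntegers K)⁰ K)
      = ((Ideal.span {a} * J : Ideal (RingOfIntegers K)) :
          FractionalIdeal (RingOfIntegers K)⁰ K) := by
    rw [FractionalIdeal.coeIdeal_mul (Ideal.span {a}) J,
      FractionalIdeal.coeIdeal_span_singleton, ← hJ,
      ← FractionalIdeal.spanSingleton_mul_spanSingleton]
    ring
  have h2 : Ideal.span {a} * J ≤ P :=
    le_trans Ideal.mul_le_left ((Ideal.span_singleton_le_iff_mem P).mpr ha)
  have h3 : FractionalIdeal.spanSingleton (RingOfIntegers K)⁰ ((a : K) * ω) *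
      ((differentIdeal ℤ (RingOfIntegers K) : Ideal (RingOfIntegers K)) :
        FractionalIdeal (RingOfIntegers K)⁰ K) *
      ((P : Ideal (RingOfIntegers K)) : FractionalIdeal (RingOfIntegers K)⁰ K)
      ≤ ((P : Ideal (RingOfIntegers K)) : FractionalIdeal (RingOfIntegers K)⁰ K) := by
    rw [mul_assoc, ← FractionalIdeal.coeIdeal_mul, h1]
    exact (FractionalIdeal.coeIdeal_le_coeIdeal K).mpr h2
  have h4 : FractionalIdeal.spanSingleton (RingOfIntegers K)⁰ ((a : K) * ω) *
      ((differentIdeal ℤ (RingOfIntegers K) : Ideal (RingOfIntegers K)) :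
        FractionalIdeal (RingOfIntegers K)⁰ K) ≤ 1 := by
    have h5 := mul_left_mono
      (a := (((P : Ideal (RingOfIntegers K)) : FractionalIdeal (RingOfIntegers K)⁰ K))⁻¹) h3
    simp only at h5
    rwa [mul_assoc, hPcancel, mul_one] at h5
  rw [hDdef] at h4
  have h5 := mul_left_mono
      (a := (FractionalIdeal.dual ℤ ℚ (1 : FractionalIdeal (RingOfIntegers K)⁰ K))) h4
  simp only at h5
  rw [mul_assoc, hdualcancel, mul_one, one_mul] at h5
  have h6 : (a : K) * ω ∈
      FractionalIdeal.dual ℤ ℚ (1 : FractionalIdeal (RingOfIntegers K)⁰ K) :=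
    FractionalIdeal.spanSingleton_le_iff_mem.mp h5
  have h7 := (FractionalIdeal.mem_dual hone).mp h6 1 (FractionalIdeal.one_mem_one _)
  rwa [Algebra.traceForm_apply, mul_one] at h7

/-- Auxiliary: some trace of a multiple of `ω` is not an integer. -/
private lemma trace_nontriv_aux (K : Type*) [Field K] [NumberField K]
    (P : Ideal (RingOfIntegers K)) (ω : K) (J : Ideal (RingOfIntegers K)) (hJP : ¬ J ≤ P)
    (hJ : (FractionalIdeal.spanSingleton (nonZeroDivisors (RingOfIntegers K)) ω) *
        ((differentIdeal ℤ (RingOfIntegers K) * P : Ideal (RingOfIntegers K)) :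
          FractionalIdeal (nonZeroDivisors (RingOfIntegers K)) K)
      = (J : FractionalIdeal (nonZeroDivisors (RingOfIntegers K)) K)) :
    ∃ a : RingOfIntegers K,
      Algebra.trace ℚ K ((a : K) * ω) ∉ (algebraMap ℤ ℚ).range := by
  have hDdef : ((differentIdeal ℤ (RingOfIntegers K) : Ideal (RingOfIntegers K)) :
        FractionalIdeal (RingOfIntegers K)⁰ K)
      = (FractionalIdeal.dual ℤ ℚ (1 : FractionalIdeal (RingOfIntegers K)⁰ K))⁻¹ :=
    coeIdeal_differentIdeal ℤ ℚ K (RingOfIntegers K)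
  have hone : (1 : FractionalIdeal (RingOfIntegers K)⁰ K) ≠ 0 := by
    intro h
    exact one_ne_zero (α := K) (by
      have h1 := FractionalIdeal.one_mem_one (P := K) ((RingOfIntegers K)⁰)
      rw [h] at h1
      simpa using h1)
  have hdualne : (FractionalIdeal.dual ℤ ℚ (1 : FractionalIdeal (RingOfIntegers K)⁰ K)) ≠ 0 :=
    FractionalIdeal.dual_ne_zero ℤ ℚ (hI := hone)
  by_contra hcon
  push_neg at hcon
  have hω_mem : ω ∈
      FractionalIdeal.dual ℤ ℚ (1 : FractionalIdeal (RingOfIntegers K)⁰ K) := by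
    rw [FractionalIdeal.mem_dual hone]
    intro b hb
    obtain ⟨a, rfl⟩ := (FractionalIdeal.mem_one_iff _).mp hb
    rw [Algebra.traceForm_apply, mul_comm]
    exact hcon a
  have hle : FractionalIdeal.spanSingleton (RingOfIntegers K)⁰ ω ≤
      FractionalIdeal.dual ℤ ℚ (1 : FractionalIdeal (RingOfIntegers K)⁰ K) :=
    FractionalIdeal.spanSingleton_le_iff_mem.mpr hω_mem
  have hfin : (J : FractionalIdeal (RingOfIntegers K)⁰ K) ≤
      ((P : Ideal (RingOfIntegers K)) : FractionalIdeal (RingOfIntegers K)⁰ K) := by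
    rw [← hJ, FractionalIdeal.coeIdeal_mul, hDdef, ← mul_assoc]
    calc FractionalIdeal.spanSingleton (RingOfIntegers K)⁰ ω *
          (FractionalIdeal.dual ℤ ℚ (1 : FractionalIdeal (RingOfIntegers K)⁰ K))⁻¹ *
          ((P : Ideal (RingOfIntegers K)) : FractionalIdeal (RingOfIntegers K)⁰ K)
        ≤ FractionalIdeal.dual ℤ ℚ (1 : FractionalIdeal (RingOfIntegers K)⁰ K) *
          (FractionalIdeal.dual ℤ ℚ (1 : FractionalIdeal (RingOfIntegers K)⁰ K))⁻¹ *
          ((P : Ideal (RingOfIntegers K)) : FractionalIdeal (RingOfIntegers K)⁰ K) :=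
          mul_left_mono (mul_left_mono hle)
      _ = ((P : Ideal (RingOfIntegers K)) : FractionalIdeal (RingOfIntegers K)⁰ K) := by
          rw [mul_inv_cancel₀ hdualne, one_mul]
  exact hJP ((FractionalIdeal.coeIdeal_le_coeIdeal K).mp hfin)

/-- Auxiliary: pushing coercions through the quadratic form. -/
private lemma coe_quad_aux (K : Type*) [Field K] [NumberField K] (ω : K)
    (a b c : RingOfIntegers K) :
    2 * ((a : K) ^ 2 + (a : K) * (b : K) + (c : K) * (b : K) ^ 2) * ω
      = 2 * (((a ^ 2 + a * b + c * b ^ 2 : RingOfIntegers K)) : K) * ω := by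
  simp only [NumberField.RingOfIntegers.coe_eq_algebraMap, map_add, map_mul, map_pow]

/-- Auxiliary: the character `a ↦ e(2aω)` on the ring of integers. -/
private lemma fchar_aux (K : Type*) [Field K] [NumberField K]
    (P : Ideal (RingOfIntegers K)) (ω : K) (e : K → ℂ)
    (he : ∀ α : K, e α = Complex.exp (Real.pi * Complex.I * ((Algebra.trace ℚ K α : ℚ) : ℂ)))
    (f : RingOfIntegers K → ℂ) (hf : ∀ a : RingOfIntegers K, f a = e (2 * (a : K) * ω))
    (hint : ∀ a : RingOfIntegers K, a ∈ P →
      Algebra.trace ℚ K ((a : K) * ω) ∈ (algebraMap ℤ ℚ).range)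
    (hnt : ∃ a : RingOfIntegers K,
      Algebra.trace ℚ K ((a : K) * ω) ∉ (algebraMap ℤ ℚ).range) :
    (∀ a b : RingOfIntegers K, f (a + b) = f a * f b) ∧
    (∀ a ∈ P, f a = 1) ∧ (∃ a : RingOfIntegers K, f a ≠ 1) := by
  have hf_apply : ∀ a : RingOfIntegers K,
      f a = Complex.exp (Real.pi * Complex.I *
        ((Algebra.trace ℚ K (2 * (a : K) * ω) : ℚ) : ℂ)) := fun a => by rw [hf, he]
  have htrace2 : ∀ a : RingOfIntegers K,
      Algebra.trace ℚ K (2 * (a : K) * ω) = 2 * Algebra.trace ℚ K ((a : K) * ω) := by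
    intro a
    have h1 : (2 : K) * (a : K) * ω = (2 : ℚ) • ((a : K) * ω) := by
      rw [Rat.smul_def]
      push_cast
      ring
    rw [h1, map_smul, smul_eq_mul]
  refine ⟨?_, ?_, ?_⟩
  · intro a b
    rw [hf_apply, hf_apply, hf_apply, ← Complex.exp_add]
    congr 1
    have h1 : (2 : K) * ((a + b : RingOfIntegers K) : K) * ω
        = 2 * (a : K) * ω + 2 * (b : K) * ω := by
      simp only [NumberField.RingOfIntegers.coe_eq_algebraMap, map_add]
      ring
    rw [h1, map_add]
    push_cast
    ring
  · intro a ha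
    obtain ⟨n, hn⟩ := hint a ha
    rw [hf_apply, htrace2 a, ← hn]
    have hn2 : (algebraMap ℤ ℚ) n = (n : ℚ) := by simp
    rw [hn2]
    have h3 : (Real.pi : ℂ) * Complex.I * (((2 : ℚ) * (n : ℚ) : ℚ) : ℂ)
        = (n : ℂ) * (2 * (Real.pi : ℂ) * Complex.I) := by
      push_cast
      ring
    rw [h3]
    exact Complex.exp_int_mul_two_pi_mul_I n
  · obtain ⟨a, hna⟩ := hnt
    refine ⟨a, fun hcon => hna ?_⟩
    rw [hf_apply, htrace2 a, Complex.exp_eq_one_iff] at hcon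
    obtain ⟨n, hn⟩ := hcon
    have hπ : ((2 : ℂ) * (Real.pi : ℂ) * Complex.I) ≠ 0 :=
      mul_ne_zero (mul_ne_zero two_ne_zero
        (Complex.ofReal_ne_zero.mpr Real.pi_ne_zero)) Complex.I_ne_zero
    have h2 : ((2 : ℂ) * (Real.pi : ℂ) * Complex.I) *
          ((Algebra.trace ℚ K ((a : K) * ω) : ℚ) : ℂ)
        = ((2 : ℂ) * (Real.pi : ℂ) * Complex.I) * (n : ℂ) := by
      push_cast at hn ⊢
      linear_combination hn
    have h3 := mul_left_cancel₀ hπ h2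
    have h4 : Algebra.trace ℚ K ((a : K) * ω) = (n : ℚ) := by exact_mod_cast h3
    exact ⟨n, by simp [h4]⟩

end Aux

/-- At a prime `P | 2O`, the anisotropic-plane character sum
`Σ_{x,y ∈ O/P} e{2(x² + xy + εy²)ω}` equals `−N(P)`, where `1 + y + εy² ∉ P` for all `y`
(the quadratic-defect condition on `1 − 4ε`), `e{α} = exp(πi Tr_{K/ℚ}(α))`, and `ω`
generates `∂⁻¹P⁻¹` locally at `P`. -/
theorem anisotropic_plane_sum_at_two
    (K : Type*) [Field K] [NumberField K]
    (htr : ∀ v : InfinitePlace K, v.IsReal)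
    (P : Ideal (RingOfIntegers K)) [P.IsMaximal] (hP0 : P ≠ ⊥)
    (hP2 : P ∣ Ideal.span {(2 : RingOfIntegers K)})
    [Fintype (RingOfIntegers K ⧸ P)]
    (ω : K)
    (hω : ∃ J : Ideal (RingOfIntegers K), ¬ J ≤ P ∧
      (FractionalIdeal.spanSingleton (nonZeroDivisors (RingOfIntegers K)) ω) *
        ((differentIdeal ℤ (RingOfIntegers K) * P : Ideal (RingOfIntegers K)) :
          FractionalIdeal (nonZeroDivisors (RingOfIntegers K)) K)
      = (J : FractionalIdeal (nonZeroDivisors (RingOfIntegers K)) K))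
    (s : (RingOfIntegers K ⧸ P) → RingOfIntegers K)
    (hs : ∀ x, Ideal.Quotient.mk P (s x) = x)
    (e : K → ℂ)
    (he : ∀ α : K, e α = Complex.exp (Real.pi * Complex.I * ((Algebra.trace ℚ K α : ℚ) : ℂ)))
    (ε : RingOfIntegers K)
    (hε : ∀ y : RingOfIntegers K, 1 + y + ε * y ^ 2 ∉ P) :
    (∑ x : RingOfIntegers K ⧸ P, ∑ y : RingOfIntegers K ⧸ P,
        e (2 * ((s x : K) ^ 2 + (s x : K) * (s y : K) + (ε : K) * (s y : K) ^ 2) * ω))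
      = -(Fintype.card (RingOfIntegers K ⧸ P) : ℂ) := by
  classical
  obtain ⟨J, hJP, hJ⟩ := hω
  haveI : Nontrivial (RingOfIntegers K ⧸ P) :=
    Ideal.Quotient.nontrivial_iff.mpr (Ideal.IsMaximal.ne_top ‹P.IsMaximal›)
  set f : RingOfIntegers K → ℂ := fun a => e (2 * (a : K) * ω) with hf
  obtain ⟨hf_add, hf_one, hf_nontriv⟩ := fchar_aux K P ω e he f (fun a => rfl)
    (trace_int_aux K P hP0 ω J hJ) (trace_nontriv_aux K P ω J hJP hJ)
  obtain ⟨hψ_mk, hψ_add, hψ0, hψsum⟩ := psi_aux P f hf_add hf_one hf_nontriv s hs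
  have h2F : (2 : RingOfIntegers K ⧸ P) = 0 := two_aux P hP2
  have hεF := eps_aux P s hs ε hε
  have hmkQ := mk_aux P s hs ε
  have hterm : ∀ x y : RingOfIntegers K ⧸ P,
      e (2 * ((s x : K) ^ 2 + (s x : K) * (s y : K) + (ε : K) * (s y : K) ^ 2) * ω)
        = f (s (x ^ 2 + x * y + (Ideal.Quotient.mk P ε) * y ^ 2)) := by
    intro x y
    calc e (2 * ((s x : K) ^ 2 + (s x : K) * (s y : K) + (ε : K) * (s y : K) ^ 2) * ω)
        = e (2 * (((s x ^ 2 + s x * s y + ε * s y ^ 2 : RingOfIntegers K)) : K) * ω) := by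
          rw [coe_quad_aux K ω (s x) (s y) ε]
      _ = f (s x ^ 2 + s x * s y + ε * s y ^ 2) := rfl
      _ = f (s (Ideal.Quotient.mk P (s x ^ 2 + s x * s y + ε * s y ^ 2))) :=
          (hψ_mk (s x ^ 2 + s x * s y + ε * s y ^ 2)).symm
      _ = f (s (x ^ 2 + x * y + (Ideal.Quotient.mk P ε) * y ^ 2)) := by rw [hmkQ x y]
  have hmain := quadSum_aux (F := RingOfIntegers K ⧸ P)
    (fun x hx => Ideal.Quotient.exists_inv hx) h2F (Ideal.Quotient.mk P ε) hεF
    (fun x => f (s x)) hψ_add hψ0 hψsum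
  calc (∑ x : RingOfIntegers K ⧸ P, ∑ y : RingOfIntegers K ⧸ P,
        e (2 * ((s x : K) ^ 2 + (s x : K) * (s y : K) + (ε : K) * (s y : K) ^ 2) * ω))
      = ∑ x : RingOfIntegers K ⧸ P, ∑ y : RingOfIntegers K ⧸ P,
          f (s (x ^ 2 + x * y + (Ideal.Quotient.mk P ε) * y ^ 2)) :=
        Finset.sum_congr rfl fun x _ => Finset.sum_congr rfl fun y _ => hterm x y
    _ = ∑ p : (RingOfIntegers K ⧸ P) × (RingOfIntegers K ⧸ P),
          f (s (p.1 ^ 2 + p.1 * p.2 + (Ideal.Quotient.mk P ε) * p.2 ^ 2)) :=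
        (Fintype.sum_prod_type' (fun x y : RingOfIntegers K ⧸ P =>
          f (s (x ^ 2 + x * y + (Ideal.Quotient.mk P ε) * y ^ 2)))).symm
    _ = -(Fintype.card (RingOfIntegers K ⧸ P) : ℂ) := hmain
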